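/- Let G be a finite graph with t vertices, m edges, and maximum degree Δ, and let w be a positive integer. For any real number p with 0 < p < 1, set q = 1 − p²(1−p)^w and D = m·C(t−2,w) − (m − (w+2)Δ)·C(t−w−4,w). Then N(G,w;1) ≤ ⌈log₂(e(D+1)) / (−log₂ q)⌉. -/

import Mathlib

/-- `A` is a `(w,d)`-covering of the graph `G`. -/
def IsCovering {V : Type*} [Fintype V] [DecidableEq V] (G : SimpleGraph V)
    (w d : ℕ) {n : ℕ} (A : Fin n → Finset V) : Prop :=
  ∀ u v : V, G.Adj u v → ∀ W : Finset V, W.card = w → u ∉ W → v ∉ W →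
    d ≤ (Finset.univ.filter
      (fun j => u ∈ A j ∧ v ∈ A j ∧ Disjoint W (A j))).card

/-- `N(G,w;d)`: the minimum number of sets in a `(w,d)`-covering of `G`. -/
noncomputable def NGraphCov {V : Type*} [Fintype V] [DecidableEq V]
    (G : SimpleGraph V) (w d : ℕ) : ℕ :=
  sInf {n : ℕ | ∃ A : Fin n → Finset V, IsCovering G w d A}

set_option linter.unusedSectionVars false
set_option maxHeartbeats 1000000

open Finset

namespace LLLSpace

variable {I : Type*} [Fintype I] [DecidableEq I]

noncomputable def wt (pr : I → ℝ) (f : I → Bool) : ℝ :=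
  ∏ i, (if f i then pr i else 1 - pr i)

open scoped Classical in
noncomputable def Pr (pr : I → ℝ) (A : (I → Bool) → Prop) : ℝ :=
  ∑ f : I → Bool, if A f then wt pr f else 0

variable {pr : I → ℝ}

lemma wt_nonneg (hpr : ∀ i, 0 ≤ pr i ∧ pr i ≤ 1) (f : I → Bool) : 0 ≤ wt pr f := by
  apply Finset.prod_nonneg
  intro i _
  rcases hpr i with ⟨h0, h1⟩
  split <;> linarith

lemma Pr_nonneg (hpr : ∀ i, 0 ≤ pr i ∧ pr i ≤ 1) (A : (I → Bool) → Prop) : 0 ≤ Pr pr A := by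
  classical
  apply Finset.sum_nonneg
  intro f _
  split
  · exact wt_nonneg hpr f
  · exact le_refl 0

lemma Pr_congr {A B : (I → Bool) → Prop} (h : ∀ f, A f ↔ B f) : Pr pr A = Pr pr B := by
  classical
  unfold Pr
  apply Finset.sum_congr rfl
  intro f _
  simp [h f]

lemma Pr_mono (hpr : ∀ i, 0 ≤ pr i ∧ pr i ≤ 1) {A B : (I → Bool) → Prop}
    (h : ∀ f, A f → B f) : Pr pr A ≤ Pr pr B := by
  classical
  apply Finset.sum_le_sum
  intro f _
  by_cases hA : A f
  · simp [hA, h f hA]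
  · simp [hA]
    split
    · exact wt_nonneg hpr f
    · exact le_refl 0

lemma sum_prod_bool {κ : Type*} [Fintype κ] [DecidableEq κ] (φ : κ → Bool → ℝ) :
    ∑ f : κ → Bool, ∏ i, φ i (f i) = ∏ i, (φ i true + φ i false) := by
  have := Finset.prod_univ_sum (fun _ : κ => (Finset.univ : Finset Bool)) (fun i b => φ i b)
  rw [Fintype.piFinset_univ] at this
  rw [← this]
  apply Finset.prod_congr rfl
  intro i _
  simp [Fintype.sum_bool]

lemma sum_wt : ∑ f : I → Bool, wt pr f = 1 := by
  unfold wt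
  rw [sum_prod_bool (fun i b => if b then pr i else 1 - pr i)]
  simp

lemma Pr_true : Pr pr (fun _ => True) = 1 := by
  classical
  unfold Pr
  simp [sum_wt]

lemma Pr_and_not (A B : (I → Bool) → Prop) :
    Pr pr (fun f => A f ∧ ¬ B f) = Pr pr A - Pr pr (fun f => B f ∧ A f) := by
  classical
  unfold Pr
  rw [← Finset.sum_sub_distrib]
  apply Finset.sum_congr rfl
  intro f _
  by_cases hA : A f <;> by_cases hB : B f <;> simp [hA, hB]

lemma Pr_false : Pr pr (fun _ => False) = 0 := by
  classical
  unfold Pr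
  simp

lemma Pr_not (B : (I → Bool) → Prop) : Pr pr (fun f => ¬ B f) = 1 - Pr pr B := by
  classical
  have h := Pr_and_not (pr := pr) (fun _ => True) B
  have h1 : Pr pr (fun f => (fun _ => True) f ∧ ¬ B f) = Pr pr (fun f => ¬ B f) :=
    Pr_congr (fun f => by simp)
  have h2 : Pr pr (fun f => B f ∧ (fun _ => True) f) = Pr pr B :=
    Pr_congr (fun f => by simp)
  rw [h1, h2, Pr_true] at h
  linarith

def splitEquiv (s : Finset I) :
    (({i // i ∈ s} → Bool) × ({i // i ∉ s} → Bool)) ≃ (I → Bool) where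
  toFun gh := fun i => if hi : i ∈ s then gh.1 ⟨i, hi⟩ else gh.2 ⟨i, hi⟩
  invFun f := (fun i => f i, fun i => f i)
  left_inv := by
    rintro ⟨g, h⟩
    ext i
    · simp [i.2]
    · simp [i.2]
  right_inv := by
    intro f
    ext i
    by_cases hi : i ∈ s <;> simp [hi]

lemma sum_split (s : Finset I) (F : (I → Bool) → ℝ) :
    ∑ f : I → Bool, F f =
      ∑ g : {i // i ∈ s} → Bool, ∑ h : {i // i ∉ s} → Bool,
        F (splitEquiv s (g, h)) := by
  rw [← Equiv.sum_comp (splitEquiv s) F, Fintype.sum_prod_type]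

lemma wt_split (s : Finset I) (g : {i // i ∈ s} → Bool) (h : {i // i ∉ s} → Bool) :
    wt pr (splitEquiv s (g, h)) =
      (∏ i : {i // i ∈ s}, (if g i then pr i else 1 - pr i)) *
      (∏ i : {i // i ∉ s}, (if h i then pr i else 1 - pr i)) := by
  unfold wt
  rw [← Finset.prod_mul_prod_compl s]
  congr 1
  · rw [Finset.prod_subtype s (fun x => Iff.rfl)
      (fun i => if (splitEquiv s (g,h)) i then pr i else 1 - pr i)]
    apply Finset.prod_congr rfl
    intro i _
    congr 1
    simp [splitEquiv, i.2]
  · rw [Finset.prod_subtype (p := fun i => i ∉ s) sᶜ (fun x => Finset.mem_compl)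
      (fun i => if (splitEquiv s (g,h)) i then pr i else 1 - pr i)]
    apply Finset.prod_congr rfl
    intro i _
    congr 1
    simp [splitEquiv, i.2]

lemma sum_wt_subtype_mem (s : Finset I) :
    ∑ g : {i // i ∈ s} → Bool, ∏ i : {i // i ∈ s}, (if g i then pr i else 1 - pr i) = 1 := by
  rw [sum_prod_bool (fun (i : {i // i ∈ s}) b => if b then pr i.1 else 1 - pr i.1)]
  simp

lemma sum_wt_subtype_notmem (s : Finset I) :
    ∑ h : {i // i ∉ s} → Bool, ∏ i : {i // i ∉ s}, (if h i then pr i else 1 - pr i) = 1 := by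
  rw [sum_prod_bool (fun (i : {i // i ∉ s}) b => if b then pr i.1 else 1 - pr i.1)]
  simp

/-- Independence: events depending on disjoint coordinate sets factorize. -/
lemma Pr_and_eq (s t : Finset I) (hst : Disjoint s t)
    (A B : (I → Bool) → Prop)
    (hA : ∀ f g, (∀ i ∈ s, f i = g i) → (A f ↔ A g))
    (hB : ∀ f g, (∀ i ∈ t, f i = g i) → (B f ↔ B g)) :
    Pr pr (fun f => A f ∧ B f) = Pr pr A * Pr pr B := by
  classical
  have hAg : ∀ (g : {i // i ∈ s} → Bool) (h h' : {i // i ∉ s} → Bool),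
      A (splitEquiv s (g, h)) ↔ A (splitEquiv s (g, h')) := by
    intro g h h'
    apply hA
    intro i hi
    simp [splitEquiv, hi]
  have hBg : ∀ (g g' : {i // i ∈ s} → Bool) (h : {i // i ∉ s} → Bool),
      B (splitEquiv s (g, h)) ↔ B (splitEquiv s (g', h)) := by
    intro g g' h
    apply hB
    intro i hi
    have his : i ∉ s := fun hmem => (Finset.disjoint_left.mp hst) hmem hi
    simp [splitEquiv, his]
  set h₀ : {i // i ∉ s} → Bool := fun _ => false with hh₀
  set g₀ : {i // i ∈ s} → Bool := fun _ => false with hg₀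
  set u : ({i // i ∈ s} → Bool) → ℝ :=
    fun g => ∏ i : {i // i ∈ s}, (if g i then pr i.1 else 1 - pr i.1) with hu
  set v : ({i // i ∉ s} → Bool) → ℝ :=
    fun h => ∏ i : {i // i ∉ s}, (if h i then pr i.1 else 1 - pr i.1) with hv
  have key : ∀ (g : {i // i ∈ s} → Bool) (h : {i // i ∉ s} → Bool),
      wt pr (splitEquiv s (g, h)) = u g * v h := fun g h => wt_split s g h
  unfold Pr
  beta_reduce
  rw [sum_split s, sum_split s, sum_split s]
  have eq1 : ∀ g h, (if A (splitEquiv s (g,h)) ∧ B (splitEquiv s (g,h))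
        then wt pr (splitEquiv s (g,h)) else 0)
      = (if A (splitEquiv s (g,h₀)) then u g else 0) *
        (if B (splitEquiv s (g₀,h)) then v h else 0) := by
    intro g h
    rw [key]
    rw [if_congr (and_congr (hAg g h h₀) (hBg g g₀ h)) rfl rfl]
    by_cases hA' : A (splitEquiv s (g,h₀)) <;>
      by_cases hB' : B (splitEquiv s (g₀,h)) <;> simp [hA', hB']
  have eq2 : ∀ g h, (if A (splitEquiv s (g,h)) then wt pr (splitEquiv s (g,h)) else 0)
      = (if A (splitEquiv s (g,h₀)) then u g else 0) * v h := by
    intro g h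
    rw [key, if_congr (hAg g h h₀) rfl rfl]
    by_cases hA' : A (splitEquiv s (g,h₀)) <;> simp [hA']
  have eq3 : ∀ g h, (if B (splitEquiv s (g,h)) then wt pr (splitEquiv s (g,h)) else 0)
      = u g * (if B (splitEquiv s (g₀,h)) then v h else 0) := by
    intro g h
    rw [key, if_congr (hBg g g₀ h) rfl rfl]
    by_cases hB' : B (splitEquiv s (g₀,h)) <;> simp [hB']
  simp only [eq2, eq3]
  simp only [← Finset.mul_sum, ← Finset.sum_mul]
  have h1 : ∑ h : ({i // i ∉ s} → Bool), v h = 1 := sum_wt_subtype_notmem s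
  have h2 : ∑ g : ({i // i ∈ s} → Bool), u g = 1 := sum_wt_subtype_mem s
  rw [h1, h2, mul_one, one_mul]
  trans (∑ g : ({i // i ∈ s} → Bool), ∑ h : ({i // i ∉ s} → Bool),
      (if A (splitEquiv s (g,h₀)) then u g else 0) * (if B (splitEquiv s (g₀,h)) then v h else 0))
  · apply Finset.sum_congr rfl
    intro g _
    apply Finset.sum_congr rfl
    intro h _
    convert eq1 g h using 2
  · simp only [← Finset.mul_sum, ← Finset.sum_mul]


/-- n-ary factorization over pairwise disjoint supports -/
lemma Pr_forall_eq {J : Type*} [DecidableEq J] (T : Finset J)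
    (E : J → (I → Bool) → Prop) (S : J → Finset I)
    (hdep : ∀ j, ∀ f g, (∀ i ∈ S j, f i = g i) → (E j f ↔ E j g))
    (hdisj : ∀ j ∈ T, ∀ k ∈ T, j ≠ k → Disjoint (S j) (S k)) :
    Pr pr (fun f => ∀ j ∈ T, E j f) = ∏ j ∈ T, Pr pr (E j) := by
  classical
  induction T using Finset.induction_on with
  | empty =>
    rw [Finset.prod_empty, ← Pr_true (pr := pr)]
    apply Pr_congr
    intro f
    simp
  | @insert j T hj ih =>
    have step : Pr pr (fun f => ∀ k ∈ insert j T, E k f)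
        = Pr pr (E j) * Pr pr (fun f => ∀ k ∈ T, E k f) := by
      rw [← Pr_and_eq (S j) (T.biUnion S) ?_ (E j) (fun f => ∀ k ∈ T, E k f) (hdep j) ?_]
      · apply Pr_congr
        intro f
        simp [Finset.forall_mem_insert]
      · rw [Finset.disjoint_biUnion_right]
        intro k hk
        exact hdisj j (Finset.mem_insert_self j T) k (Finset.mem_insert_of_mem hk)
          (fun h => hj (h ▸ hk))
      · intro f g hfg
        apply forall_congr'
        intro k
        by_cases hk : k ∈ T
        · simp only [hk, forall_true_left]
          have := hdep k f g (fun i hi => hfg i (Finset.mem_biUnion.mpr ⟨k, hk, hi⟩))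
          tauto
        · simp [hk]
    rw [step, Finset.prod_insert hj, ih]
    intro a ha b hb hab
    exact hdisj a (Finset.mem_insert_of_mem ha) b (Finset.mem_insert_of_mem hb) hab


/-- probability of a cylinder event -/
lemma Pr_cylinder (s : Finset I) (b : I → Bool) :
    Pr pr (fun f => ∀ i ∈ s, f i = b i) = ∏ i ∈ s, (if b i then pr i else 1 - pr i) := by
  classical
  unfold Pr
  beta_reduce
  rw [sum_split s]
  set bs : {i // i ∈ s} → Bool := fun i => b i.1 with hbs
  have cond : ∀ (g : {i // i ∈ s} → Bool) (h : {i // i ∉ s} → Bool),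
      (∀ i ∈ s, (splitEquiv s (g, h)) i = b i) ↔ g = bs := by
    intro g h
    constructor
    · intro hc
      funext i
      have := hc i.1 i.2
      simpa [splitEquiv, i.2] using this
    · intro hg i hi
      subst hg
      simp [splitEquiv, hi, hbs]
  have term : ∀ (g : {i // i ∈ s} → Bool) (h : {i // i ∉ s} → Bool),
      (if (∀ i ∈ s, (splitEquiv s (g, h)) i = b i) then wt pr (splitEquiv s (g, h)) else 0)
        = (if g = bs then (∏ i : {i // i ∈ s}, (if g i then pr i else 1 - pr i)) else 0) *
          (∏ i : {i // i ∉ s}, (if h i then pr i else 1 - pr i)) := by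
    intro g h
    rw [if_congr (cond g h) rfl rfl, wt_split]
    by_cases hg : g = bs <;> simp [hg]
  trans (∑ g : {i // i ∈ s} → Bool, ∑ h : {i // i ∉ s} → Bool,
        (if g = bs then (∏ i : {i // i ∈ s}, (if g i then pr i else 1 - pr i)) else 0) *
          (∏ i : {i // i ∉ s}, (if h i then pr i else 1 - pr i)))
  · apply Finset.sum_congr rfl
    intro g _
    apply Finset.sum_congr rfl
    intro h _
    convert term g h using 2
  calc (∑ g : {i // i ∈ s} → Bool, ∑ h : {i // i ∉ s} → Bool,
        (if g = bs then (∏ i : {i // i ∈ s}, (if g i then pr i else 1 - pr i)) else 0) *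
          (∏ i : {i // i ∉ s}, (if h i then pr i else 1 - pr i)))
      = (∑ g : {i // i ∈ s} → Bool,
          (if g = bs then (∏ i : {i // i ∈ s}, (if g i then pr i else 1 - pr i)) else 0)) * 1 := by
        simp only [← Finset.mul_sum]
        rw [← Finset.sum_mul, sum_wt_subtype_notmem]
    _ = ∏ i : {i // i ∈ s}, (if bs i then pr i else 1 - pr i) := by
        rw [mul_one, Finset.sum_ite_eq' Finset.univ bs
          (fun g => ∏ i : {i // i ∈ s}, (if g i then pr i else 1 - pr i))]
        simp
    _ = ∏ i ∈ s, (if b i then pr i else 1 - pr i) := by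
        rw [Finset.prod_subtype s (fun x => Iff.rfl) (fun i => if b i then pr i else 1 - pr i)]


section LLL

variable {J : Type*} [Fintype J] [DecidableEq J]
variable {pr : I → ℝ}

/-- The key induction for the symmetric Lovász Local Lemma. -/
lemma LLL_induction
    (hpr : ∀ i, 0 ≤ pr i ∧ pr i ≤ 1)
    (E : J → (I → Bool) → Prop) (S : J → Finset I)
    (hdep : ∀ j, ∀ f g, (∀ i ∈ S j, f i = g i) → (E j f ↔ E j g))
    (d : ℕ)
    (hnb : ∀ j, (univ.filter (fun k => k ≠ j ∧ ¬ Disjoint (S k) (S j))).card ≤ d)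
    (x : ℝ) (hx0 : 0 < x) (hx1 : x < 1)
    (hPE : ∀ j, Pr pr (E j) ≤ x * (1 - x) ^ d) :
    ∀ N (T : Finset J), T.card ≤ N →
      (0 < Pr pr (fun f => ∀ j ∈ T, ¬ E j f)) ∧
      (∀ i, i ∉ T → Pr pr (fun f => E i f ∧ ∀ j ∈ T, ¬ E j f) ≤
        x * Pr pr (fun f => ∀ j ∈ T, ¬ E j f)) := by
  classical
  intro N
  induction N with
  | zero =>
    intro T hT
    have hTe : T = ∅ := Finset.card_eq_zero.mp (Nat.le_zero.mp hT)
    subst hTe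
    have h1 : Pr pr (fun f => ∀ j ∈ (∅ : Finset J), ¬ E j f) = 1 := by
      rw [← Pr_true (pr := pr)]; apply Pr_congr; intro f; simp
    constructor
    · rw [h1]; norm_num
    · intro i _
      rw [h1, mul_one]
      have : Pr pr (fun f => E i f ∧ ∀ j ∈ (∅ : Finset J), ¬ E j f) = Pr pr (E i) := by
        apply Pr_congr; intro f; simp
      rw [this]
      calc Pr pr (E i) ≤ x * (1 - x) ^ d := hPE i
        _ ≤ x * 1 := by
            apply mul_le_mul_of_nonneg_left _ hx0.le
            apply pow_le_one₀ (by linarith) (by linarith)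
        _ = x := mul_one x
  | succ N ih =>
    intro T hT
    by_cases hTN : T.card ≤ N
    · exact ih T hTN
    -- T.card = N + 1, in particular T is nonempty
    have hTcard : T.card = N + 1 := le_antisymm hT (not_le.mp hTN)
    have hTne : T.Nonempty := Finset.card_pos.mp (by omega)
    -- positivity
    have hpos : 0 < Pr pr (fun f => ∀ j ∈ T, ¬ E j f) := by
      obtain ⟨j₀, hj₀⟩ := hTne
      set T' := T.erase j₀ with hT'
      have hcard' : T'.card ≤ N := by
        rw [hT', Finset.card_erase_of_mem hj₀, hTcard]
        omega
      have hsplit : Pr pr (fun f => ∀ j ∈ T, ¬ E j f)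
          = Pr pr (fun f => ∀ j ∈ T', ¬ E j f)
            - Pr pr (fun f => E j₀ f ∧ ∀ j ∈ T', ¬ E j f) := by
        rw [← Pr_and_not]
        apply Pr_congr
        intro f
        constructor
        · intro h
          exact ⟨fun j hj => h j (Finset.mem_of_mem_erase hj), h j₀ hj₀⟩
        · rintro ⟨h1, h2⟩ j hj
          by_cases hjj : j = j₀
          · subst hjj; exact h2
          · exact h1 j (Finset.mem_erase.mpr ⟨hjj, hj⟩)
      have hb := (ih T' hcard').2 j₀ (Finset.notMem_erase j₀ T)
      have hp := (ih T' hcard').1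
      rw [hsplit]
      nlinarith
    refine ⟨hpos, ?_⟩
    -- the conditional bound
    intro i hi
    set T1 := T.filter (fun k => ¬ Disjoint (S k) (S i)) with hT1
    set T2 := T.filter (fun k => Disjoint (S k) (S i)) with hT2
    have hT1T2 : T2 ∪ T1 = T := by
      rw [hT1, hT2]
      exact Finset.filter_union_filter_not_eq (fun k => Disjoint (S k) (S i)) T
    have hT1card : T1.card ≤ d := by
      refine le_trans (Finset.card_le_card ?_) (hnb i)
      intro k hk
      rw [hT1, Finset.mem_filter] at hk
      rw [Finset.mem_filter]
      exact ⟨Finset.mem_univ k, fun he => hi (he ▸ hk.1), hk.2⟩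
    -- sub-induction: peeling off T1
    have peel : ∀ (U : Finset J), U ⊆ T1 →
        (1 - x) ^ U.card * Pr pr (fun f => ∀ j ∈ T2, ¬ E j f) ≤
          Pr pr (fun f => ∀ j ∈ T2 ∪ U, ¬ E j f) := by
      intro U
      induction U using Finset.induction_on with
      | empty =>
        intro _
        simp only [Finset.card_empty, pow_zero, one_mul, Finset.union_empty]
        exact le_refl _
      | @insert a U ha ihU =>
        intro hsub
        have haT1 : a ∈ T1 := hsub (Finset.mem_insert_self a U)
        have hUT1 : U ⊆ T1 := fun z hz => hsub (Finset.mem_insert_of_mem hz)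
        have haT : a ∈ T := (Finset.filter_subset _ T) haT1
        have hanotin : a ∉ T2 ∪ U := by
          rw [Finset.mem_union]
          rintro (h2 | hU)
          · rw [hT2, Finset.mem_filter] at h2
            rw [hT1, Finset.mem_filter] at haT1
            exact haT1.2 h2.2
          · exact ha hU
        have hsubT : T2 ∪ U ⊆ T := by
          apply Finset.union_subset (Finset.filter_subset _ T)
          exact fun z hz => (Finset.filter_subset _ T) (hUT1 hz)
        have hcardTU : (T2 ∪ U).card ≤ N := by
          have : T2 ∪ U ⊆ T.erase a := by
            intro z hz
            exact Finset.mem_erase.mpr ⟨fun he => hanotin (he ▸ hz), hsubT hz⟩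
          calc (T2 ∪ U).card ≤ (T.erase a).card := Finset.card_le_card this
            _ = N := by rw [Finset.card_erase_of_mem haT, hTcard]; omega
        have hbound := (ih (T2 ∪ U) hcardTU).2 a hanotin
        have hsplit : Pr pr (fun f => ∀ j ∈ T2 ∪ insert a U, ¬ E j f)
            = Pr pr (fun f => ∀ j ∈ T2 ∪ U, ¬ E j f)
              - Pr pr (fun f => E a f ∧ ∀ j ∈ T2 ∪ U, ¬ E j f) := by
          rw [← Pr_and_not]
          apply Pr_congr
          intro f
          constructor
          · intro h
            refine ⟨fun j hj => ?_, h a (by simp)⟩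
            rw [Finset.mem_union] at hj
            rcases hj with hj | hj
            · exact h j (Finset.mem_union_left _ hj)
            · exact h j (Finset.mem_union_right _ (Finset.mem_insert_of_mem hj))
          · rintro ⟨h1, h2⟩ j hj
            rw [Finset.mem_union, Finset.mem_insert] at hj
            rcases hj with hj | hj | hj
            · exact h1 j (Finset.mem_union_left _ hj)
            · subst hj; exact h2
            · exact h1 j (Finset.mem_union_right _ hj)
        have step1 : (1 - x) * Pr pr (fun f => ∀ j ∈ T2 ∪ U, ¬ E j f) ≤
            Pr pr (fun f => ∀ j ∈ T2 ∪ insert a U, ¬ E j f) := by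
          rw [hsplit]
          nlinarith [Pr_nonneg hpr (fun f => ∀ j ∈ T2 ∪ U, ¬ E j f)]
        have hx' : (0:ℝ) ≤ 1 - x := by linarith
        calc (1 - x) ^ (insert a U).card * Pr pr (fun f => ∀ j ∈ T2, ¬ E j f)
            = (1 - x) * ((1 - x) ^ U.card * Pr pr (fun f => ∀ j ∈ T2, ¬ E j f)) := by
              rw [Finset.card_insert_of_notMem ha]; ring
          _ ≤ (1 - x) * Pr pr (fun f => ∀ j ∈ T2 ∪ U, ¬ E j f) :=
              mul_le_mul_of_nonneg_left (ihU hUT1) hx'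
          _ ≤ _ := step1
    have hpeel := peel T1 (le_refl _ : T1 ⊆ T1)
    rw [hT1T2] at hpeel
    -- independence step
    have hindep : Pr pr (fun f => E i f ∧ ∀ j ∈ T2, ¬ E j f)
        = Pr pr (E i) * Pr pr (fun f => ∀ j ∈ T2, ¬ E j f) := by
      apply Pr_and_eq (S i) (T2.biUnion S)
      · rw [Finset.disjoint_biUnion_right]
        intro k hk
        rw [hT2, Finset.mem_filter] at hk
        exact hk.2.symm
      · exact hdep i
      · intro f g hfg
        apply forall_congr'
        intro k
        by_cases hk : k ∈ T2
        · simp only [hk, forall_true_left]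
          have := hdep k f g (fun z hz => hfg z (Finset.mem_biUnion.mpr ⟨k, hk, hz⟩))
          tauto
        · simp [hk]
    have hPT2nonneg : 0 ≤ Pr pr (fun f => ∀ j ∈ T2, ¬ E j f) := Pr_nonneg hpr _
    have hmono : Pr pr (fun f => E i f ∧ ∀ j ∈ T, ¬ E j f) ≤
        Pr pr (fun f => E i f ∧ ∀ j ∈ T2, ¬ E j f) := by
      apply Pr_mono hpr
      rintro f ⟨h1, h2⟩
      exact ⟨h1, fun j hj => h2 j ((Finset.filter_subset _ T) hj)⟩
    have hpow : (1 - x) ^ d ≤ (1 - x) ^ T1.card :=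
      pow_le_pow_of_le_one (by linarith) (by linarith) hT1card
    calc Pr pr (fun f => E i f ∧ ∀ j ∈ T, ¬ E j f)
        ≤ Pr pr (E i) * Pr pr (fun f => ∀ j ∈ T2, ¬ E j f) := hmono.trans hindep.le
      _ ≤ (x * (1 - x) ^ d) * Pr pr (fun f => ∀ j ∈ T2, ¬ E j f) :=
          mul_le_mul_of_nonneg_right (hPE i) hPT2nonneg
      _ ≤ (x * (1 - x) ^ T1.card) * Pr pr (fun f => ∀ j ∈ T2, ¬ E j f) := by
          apply mul_le_mul_of_nonneg_right _ hPT2nonneg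
          exact mul_le_mul_of_nonneg_left hpow hx0.le
      _ = x * ((1 - x) ^ T1.card * Pr pr (fun f => ∀ j ∈ T2, ¬ E j f)) := by ring
      _ ≤ x * Pr pr (fun f => ∀ j ∈ T, ¬ E j f) :=
          mul_le_mul_of_nonneg_left hpeel hx0.le

/-- The symmetric Lovász Local Lemma over the weighted boolean cube. -/
theorem LLL (hpr : ∀ i, 0 ≤ pr i ∧ pr i ≤ 1)
    (E : J → (I → Bool) → Prop) (S : J → Finset I)
    (hdep : ∀ j, ∀ f g, (∀ i ∈ S j, f i = g i) → (E j f ↔ E j g))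
    (d : ℕ)
    (hnb : ∀ j, (univ.filter (fun k => k ≠ j ∧ ¬ Disjoint (S k) (S j))).card ≤ d)
    (x : ℝ) (hx0 : 0 < x) (hx1 : x < 1)
    (hPE : ∀ j, Pr pr (E j) ≤ x * (1 - x) ^ d) :
    ∃ f : I → Bool, ∀ j, ¬ E j f := by
  classical
  have hpos := (LLL_induction hpr E S hdep d hnb x hx0 hx1 hPE
    (Finset.univ : Finset J).card Finset.univ (le_refl _)).1
  by_contra hcon
  push_neg at hcon
  have hzero : Pr pr (fun f => ∀ j ∈ (Finset.univ : Finset J), ¬ E j f) = 0 := by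
    unfold Pr
    apply Finset.sum_eq_zero
    intro f _
    obtain ⟨j, hj⟩ := hcon f
    rw [if_neg]
    intro h
    exact h j (Finset.mem_univ j) hj
  rw [hzero] at hpos
  exact lt_irrefl 0 hpos

end LLL

end LLLSpace

lemma aux_exp (d : ℕ) : (1 + 1/((d:ℝ)+1))^(d+1) ≤ Real.exp 1 := by
  have h1 : (0:ℝ) < (d:ℝ)+1 := by positivity
  have h2 : 1 + 1/((d:ℝ)+1) ≤ Real.exp (1/((d:ℝ)+1)) := by
    have := Real.add_one_le_exp (1/((d:ℝ)+1)); linarith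
  calc (1 + 1/((d:ℝ)+1))^(d+1) ≤ (Real.exp (1/((d:ℝ)+1)))^(d+1) :=
      pow_le_pow_left₀ (by positivity) h2 _
    _ = Real.exp (((d:ℕ)+1 : ℕ) * (1/((d:ℝ)+1))) := by
        rw [Real.exp_nat_mul]
    _ = Real.exp 1 := by
        congr 1
        push_cast
        field_simp

lemma aux_x (d : ℕ) :
    1/(Real.exp 1 * ((d:ℝ)+1)) ≤ (1/((d:ℝ)+2)) * (1 - 1/((d:ℝ)+2))^d := by
  have hd1 : (0:ℝ) < (d:ℝ)+1 := by positivity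
  have hd2 : (0:ℝ) < (d:ℝ)+2 := by positivity
  have he : (0:ℝ) < Real.exp 1 := Real.exp_pos 1
  have key : ((d:ℝ)+2)^(d+1) ≤ Real.exp 1 * ((d:ℝ)+1)^(d+1) := by
    have h := aux_exp d
    have hexpand : (1 + 1/((d:ℝ)+1)) = ((d:ℝ)+2)/((d:ℝ)+1) := by field_simp; ring
    rw [hexpand, div_pow, div_le_iff₀ (by positivity)] at h
    linarith
  have h1x : (1:ℝ) - 1/((d:ℝ)+2) = ((d:ℝ)+1)/((d:ℝ)+2) := by field_simp; ring
  have hrhs : (1/((d:ℝ)+2)) * (((d:ℝ)+1)/((d:ℝ)+2))^d = ((d:ℝ)+1)^d / ((d:ℝ)+2)^(d+1) := by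
    rw [div_pow, pow_succ]
    field_simp
  rw [h1x, hrhs, div_le_div_iff₀ (by positivity) (by positivity), one_mul]
  calc ((d:ℝ)+2)^(d+1) ≤ Real.exp 1 * ((d:ℝ)+1)^(d+1) := key
    _ = ((d:ℝ)+1)^d * (Real.exp 1 * ((d:ℝ)+1)) := by rw [pow_succ]; ring

lemma aux_qn (q : ℝ) (hq0 : 0 < q) (hq1 : q < 1) (Y : ℝ) (hY : 1 ≤ Y)
    (n : ℕ) (hn : Real.logb 2 Y / (-Real.logb 2 q) ≤ (n:ℝ)) : q^n ≤ 1/Y := by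
  have hY0 : (0:ℝ) < Y := by linarith
  have hlq : Real.logb 2 q < 0 := Real.logb_neg (by norm_num) hq0 hq1
  have hmul : Real.logb 2 Y ≤ (n:ℝ) * (-Real.logb 2 q) := by
    rw [div_le_iff₀ (by linarith)] at hn
    linarith
  have hqn0 : (0:ℝ) < q^n := pow_pos hq0 n
  have h1 : q^n = (2:ℝ) ^ (((n:ℝ) * Real.logb 2 q) : ℝ) := by
    rw [mul_comm, Real.rpow_mul (by norm_num), Real.rpow_logb (by norm_num) (by norm_num) hq0,
      Real.rpow_natCast]
  have h2 : 1/Y = (2:ℝ) ^ ((-Real.logb 2 Y) : ℝ) := by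
    rw [Real.rpow_neg (by norm_num), Real.rpow_logb (by norm_num) (by norm_num) hY0, one_div]
  rw [h1, h2]
  rw [Real.rpow_le_rpow_left_iff (by norm_num)]
  nlinarith


section App

variable {V : Type*} [Fintype V] [DecidableEq V] (G : SimpleGraph V) [DecidableRel G.Adj]

/-- vertex set of an unordered pair -/
def symVerts (e : Sym2 V) : Finset V := Finset.univ.filter (· ∈ e)

lemma mem_symVerts {e : Sym2 V} {z : V} : z ∈ symVerts e ↔ z ∈ e := by
  simp [symVerts]

lemma symVerts_mk (u v : V) : symVerts (s(u, v)) = {u, v} := by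
  ext z
  simp [symVerts, Sym2.mem_iff]

lemma symVerts_card {e : Sym2 V} (he : ¬ e.IsDiag) : (symVerts e).card = 2 := by
  induction e using Sym2.ind with
  | _ u v =>
    rw [symVerts_mk]
    rw [Sym2.mk_isDiag_iff] at he
    rw [Finset.card_insert_of_notMem (by simp [he]), Finset.card_singleton]

variable (w : ℕ)

/-- the collection of (edge, W) configurations -/
noncomputable def validPairs : Finset (Sym2 V × Finset V) :=
  G.edgeFinset.biUnion (fun e => {e} ×ˢ ((Finset.univ \ symVerts e).powersetCard w))

lemma mem_validPairs (ew : Sym2 V × Finset V) :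
    ew ∈ validPairs G w ↔
      ew.1 ∈ G.edgeFinset ∧ ew.2.card = w ∧ Disjoint ew.2 (symVerts ew.1) := by
  obtain ⟨e, W⟩ := ew
  simp only [validPairs, Finset.mem_biUnion, Finset.mem_product, Finset.mem_singleton,
    Finset.mem_powersetCard]
  constructor
  · rintro ⟨e', he', he, hW⟩
    subst he
    refine ⟨he', hW.2, ?_⟩
    rw [Finset.disjoint_left]
    intro z hz
    have := hW.1 hz
    rw [Finset.mem_sdiff] at this
    exact this.2
  · rintro ⟨he, hc, hd⟩
    refine ⟨e, he, rfl, ?_, hc⟩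
    intro z hz
    rw [Finset.mem_sdiff]
    exact ⟨Finset.mem_univ z, Finset.disjoint_left.mp hd hz⟩

lemma card_validPairs (t : ℕ) (ht : Fintype.card V = t) :
    (validPairs G w).card = G.edgeFinset.card * Nat.choose (t - 2) w := by
  rw [validPairs, Finset.card_biUnion]
  · rw [Finset.sum_congr rfl (g := fun _ => Nat.choose (t-2) w), Finset.sum_const, smul_eq_mul]
    intro e he
    rw [Finset.card_product, Finset.card_singleton, one_mul, Finset.card_powersetCard,
      Finset.card_sdiff_of_subset (Finset.subset_univ _), Finset.card_univ, ht, symVerts_card]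
    exact G.not_isDiag_of_mem_edgeSet (SimpleGraph.mem_edgeFinset.mp he)
  · intro a ha b hb hab
    rw [Function.onFun, Finset.disjoint_left]
    intro z hz hz'
    rw [Finset.mem_product, Finset.mem_singleton] at hz hz'
    exact hab (hz.1 ▸ hz'.1.symm ▸ rfl)


lemma card_meeting_edges (S0 : Finset V) :
    (G.edgeFinset.filter (fun e => ¬ Disjoint (symVerts e) S0)).card ≤
      ∑ v ∈ S0, G.degree v := by
  calc (G.edgeFinset.filter (fun e => ¬ Disjoint (symVerts e) S0)).card
      ≤ (S0.biUnion (fun v => G.incidenceFinset v)).card := by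
        apply Finset.card_le_card
        intro e he
        rw [Finset.mem_filter] at he
        obtain ⟨he1, he2⟩ := he
        rw [Finset.not_disjoint_iff] at he2
        obtain ⟨z, hz1, hz2⟩ := he2
        rw [Finset.mem_biUnion]
        refine ⟨z, hz2, ?_⟩
        rw [SimpleGraph.mem_incidenceFinset]
        exact ⟨SimpleGraph.mem_edgeFinset.mp he1, mem_symVerts.mp hz1⟩
    _ ≤ ∑ v ∈ S0, (G.incidenceFinset v).card := Finset.card_biUnion_le
    _ = ∑ v ∈ S0, G.degree v := by
        apply Finset.sum_congr rfl
        intro v _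
        exact SimpleGraph.card_incidenceFinset_eq_degree G v

lemma card_disjoint_pairs (t : ℕ) (ht : Fintype.card V = t) (S0 : Finset V) :
    (G.edgeFinset.filter (fun e => Disjoint (symVerts e) S0)).card *
        Nat.choose (t - S0.card - 2) w ≤
      ((validPairs G w).filter
        (fun k => Disjoint (symVerts k.1 ∪ k.2) S0)).card := by
  set B : Finset (Sym2 V × Finset V) :=
    (G.edgeFinset.filter (fun e => Disjoint (symVerts e) S0)).biUnion
      (fun e => {e} ×ˢ ((Finset.univ \ (S0 ∪ symVerts e)).powersetCard w)) with hB
  have hsub : B ⊆ (validPairs G w).filter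
      (fun k => Disjoint (symVerts k.1 ∪ k.2) S0) := by
    intro k hk
    rw [hB, Finset.mem_biUnion] at hk
    obtain ⟨e, he, hk⟩ := hk
    rw [Finset.mem_product, Finset.mem_singleton, Finset.mem_powersetCard] at hk
    obtain ⟨hk1, hk2, hk3⟩ := hk
    rw [Finset.mem_filter] at he ⊢
    obtain ⟨he1, he2⟩ := he
    have hWsub : ∀ z ∈ k.2, z ∉ S0 ∧ z ∉ symVerts e := by
      intro z hz
      have := hk2 hz
      rw [Finset.mem_sdiff, Finset.mem_union] at this
      tauto
    constructor
    · rw [mem_validPairs]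
      refine ⟨hk1 ▸ he1, hk3, ?_⟩
      rw [Finset.disjoint_left]
      intro z hz
      rw [hk1]
      exact (hWsub z hz).2
    · rw [Finset.disjoint_left]
      intro z hz
      rw [Finset.mem_union] at hz
      rcases hz with hz | hz
      · rw [hk1] at hz
        exact Finset.disjoint_left.mp he2 hz
      · exact (hWsub z hz).1
  calc (G.edgeFinset.filter (fun e => Disjoint (symVerts e) S0)).card *
        Nat.choose (t - S0.card - 2) w
      ≤ B.card := by
        rw [hB, Finset.card_biUnion]
        · rw [← smul_eq_mul, ← Finset.sum_const]
          apply Finset.sum_le_sum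
          intro e he
          rw [Finset.mem_filter] at he
          rw [Finset.card_product, Finset.card_singleton, one_mul, Finset.card_powersetCard]
          apply Nat.choose_le_choose
          have h1 : (S0 ∪ symVerts e).card ≤ S0.card + 2 := by
            calc (S0 ∪ symVerts e).card ≤ S0.card + (symVerts e).card :=
                Finset.card_union_le _ _
              _ = S0.card + 2 := by
                rw [symVerts_card (G.not_isDiag_of_mem_edgeSet
                  (SimpleGraph.mem_edgeFinset.mp he.1))]
          have h2 : (univ \ (S0 ∪ symVerts e)).card = t - (S0 ∪ symVerts e).card := by
            rw [Finset.card_sdiff_of_subset (Finset.subset_univ _), Finset.card_univ, ht]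
          omega
        · intro a ha b hb hab
          rw [Function.onFun, Finset.disjoint_left]
          intro z hz hz'
          rw [Finset.mem_product, Finset.mem_singleton] at hz hz'
          exact hab (hz.1 ▸ hz'.1.symm ▸ rfl)
    _ ≤ _ := Finset.card_le_card hsub

end App


section PBad
open LLLSpace

variable {V : Type*} [Fintype V] [DecidableEq V] (G : SimpleGraph V) [DecidableRel G.Adj]

lemma Pr_badEvent (n w : ℕ) (ew : Sym2 V × Finset V) (hval : ew ∈ validPairs G w)
    (p : ℝ) :
    Pr (fun _ : Fin n × V => p)
      (fun f => ∀ jj : Fin n, ¬ (∀ c ∈ ({jj} : Finset (Fin n)) ×ˢ (symVerts ew.1 ∪ ew.2),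
          f c = decide (c.2 ∈ symVerts ew.1)))
      = (1 - p^2 * (1-p)^w)^n := by
  classical
  rw [mem_validPairs] at hval
  obtain ⟨he, hc, hd⟩ := hval
  have hstep : Pr (fun _ : Fin n × V => p)
      (fun f => ∀ jj : Fin n, ¬ (∀ c ∈ ({jj} : Finset (Fin n)) ×ˢ (symVerts ew.1 ∪ ew.2),
          f c = decide (c.2 ∈ symVerts ew.1)))
      = ∏ jj : Fin n, Pr (fun _ : Fin n × V => p)
          (fun f => ¬ (∀ c ∈ ({jj} : Finset (Fin n)) ×ˢ (symVerts ew.1 ∪ ew.2),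
            f c = decide (c.2 ∈ symVerts ew.1))) := by
    rw [← Pr_forall_eq (pr := fun _ : Fin n × V => p) Finset.univ
      (fun jj f => ¬ (∀ c ∈ ({jj} : Finset (Fin n)) ×ˢ (symVerts ew.1 ∪ ew.2),
            f c = decide (c.2 ∈ symVerts ew.1)))
      (fun jj => ({jj} : Finset (Fin n)) ×ˢ (symVerts ew.1 ∪ ew.2)) ?_ ?_]
    · apply Pr_congr
      intro f
      simp
    · intro j f g hfg
      apply not_congr
      apply forall_congr'
      intro c
      by_cases hcmem : c ∈ ({j} : Finset (Fin n)) ×ˢ (symVerts ew.1 ∪ ew.2)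
      · simp only [hcmem, forall_true_left, hfg c hcmem]
      · exact iff_of_true (fun hcm => absurd hcm hcmem) (fun hcm => absurd hcm hcmem)
    · intro j _ k _ hjk
      rw [Finset.disjoint_left]
      intro c hc hc'
      rw [Finset.mem_product, Finset.mem_singleton] at hc hc'
      exact hjk (hc.1 ▸ hc'.1.symm ▸ rfl)
  rw [hstep]
  have heach : ∀ jj : Fin n, Pr (fun _ : Fin n × V => p)
      (fun f => ¬ (∀ c ∈ ({jj} : Finset (Fin n)) ×ˢ (symVerts ew.1 ∪ ew.2),
        f c = decide (c.2 ∈ symVerts ew.1)))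
      = 1 - p^2 * (1-p)^w := by
    intro jj
    rw [Pr_not]
    congr 1
    rw [Pr_cylinder (({jj} : Finset (Fin n)) ×ˢ (symVerts ew.1 ∪ ew.2))
      (fun c => decide (c.2 ∈ symVerts ew.1))]
    rw [Finset.prod_product, Finset.prod_singleton]
    rw [Finset.prod_union hd.symm]
    have h1 : ∏ z ∈ symVerts ew.1, (if decide (z ∈ symVerts ew.1) then p else 1 - p) = p ^ 2 := by
      rw [Finset.prod_congr rfl (g := fun _ => p), Finset.prod_const,
        symVerts_card (G.not_isDiag_of_mem_edgeSet (SimpleGraph.mem_edgeFinset.mp he))]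
      intro z hz
      simp [hz]
    have h2 : ∏ z ∈ ew.2, (if decide (z ∈ symVerts ew.1) then p else 1 - p) = (1-p) ^ w := by
      rw [Finset.prod_congr rfl (g := fun _ => 1 - p), Finset.prod_const, hc]
      intro z hz
      have : z ∉ symVerts ew.1 := Finset.disjoint_left.mp hd hz
      simp [this]
    rw [h1, h2]
  rw [Finset.prod_congr rfl (fun jj _ => heach jj), Finset.prod_const, Finset.card_univ,
    Fintype.card_fin]

end PBad

section Main
open LLLSpace

variable {V : Type*} [Fintype V] [DecidableEq V]

/-- support of a bad event -/
noncomputable def suppE (G : SimpleGraph V) [DecidableRel G.Adj] (w n : ℕ)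
    (ew : Sym2 V × Finset V) : Finset (Fin n × V) :=
  if ew ∈ validPairs G w then (Finset.univ : Finset (Fin n)) ×ˢ (symVerts ew.1 ∪ ew.2) else ∅

/-- the bad event for a configuration -/
def badE (G : SimpleGraph V) [DecidableRel G.Adj] (w n : ℕ)
    (ew : Sym2 V × Finset V) (f : Fin n × V → Bool) : Prop :=
  ew ∈ validPairs G w ∧ ∀ jj : Fin n,
    ¬ (∀ c ∈ ({jj} : Finset (Fin n)) ×ˢ (symVerts ew.1 ∪ ew.2),
        f c = decide (c.2 ∈ symVerts ew.1))

theorem main_thm (G : SimpleGraph V)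
    [DecidableRel G.Adj] (t m Δ w : ℕ) (hw : 0 < w)
    (ht : Fintype.card V = t) (hm : G.edgeFinset.card = m)
    (hΔ : G.maxDegree = Δ)
    (p : ℝ) (hp0 : 0 < p) (hp1 : p < 1)
    (q : ℝ) (hq : q = 1 - p ^ 2 * (1 - p) ^ w)
    (D : ℝ) (hD : D = (m : ℝ) * (Nat.choose (t - 2) w : ℝ) -
      ((m : ℝ) - ((w : ℝ) + 2) * (Δ : ℝ)) * (Nat.choose (t - w - 4) w : ℝ)) :
    ∃ A : Fin (⌈Real.logb 2 (Real.exp 1 * (D + 1)) / (-Real.logb 2 q)⌉₊) → Finset V,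
      IsCovering G w 1 A := by
  classical
  set n := ⌈Real.logb 2 (Real.exp 1 * (D + 1)) / (-Real.logb 2 q)⌉₊ with hn
  -- elementary real facts
  have h1p : 0 < 1 - p := by linarith
  have hpw0 : 0 < p^2 * (1-p)^w := by positivity
  have hpwle : (1-p)^w ≤ 1 := pow_le_one₀ (by linarith) (by linarith)
  have hp2 : p^2 < 1 := by nlinarith
  have hpw1 : p^2 * (1-p)^w < 1 := by nlinarith [sq_nonneg p, pow_nonneg h1p.le w]
  have hq0 : 0 < q := by rw [hq]; linarith
  have hq1 : q < 1 := by rw [hq]; linarith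
  have hC2C1 : (Nat.choose (t-w-4) w : ℝ) ≤ (Nat.choose (t-2) w : ℝ) := by
    exact_mod_cast Nat.choose_le_choose w (by omega)
  have hC2nn : (0:ℝ) ≤ (Nat.choose (t-w-4) w : ℝ) := Nat.cast_nonneg _
  have hD0 : 0 ≤ D := by
    rw [hD]
    nlinarith [mul_nonneg (Nat.cast_nonneg m : (0:ℝ) ≤ (m:ℝ)) (sub_nonneg.mpr hC2C1),
      mul_nonneg (mul_nonneg (by positivity : (0:ℝ) ≤ (w:ℝ)+2)
        (Nat.cast_nonneg Δ : (0:ℝ) ≤ (Δ:ℝ))) hC2nn]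
  have hexp1 : (1:ℝ) ≤ Real.exp 1 := by
    have := Real.add_one_le_exp 1; linarith
  have hY1 : (1:ℝ) ≤ Real.exp 1 * (D + 1) := by nlinarith
  have hqn : q^n ≤ 1/(Real.exp 1 * (D+1)) :=
    aux_qn q hq0 hq1 _ hY1 n (Nat.le_ceil _)
  -- the probabilistic setup
  set pr : Fin n × V → ℝ := fun _ => p with hpr
  have hprh : ∀ i : Fin n × V, 0 ≤ pr i ∧ pr i ≤ 1 := fun i => ⟨hp0.le, hp1.le⟩
  -- dependency structure
  have hdep : ∀ j : Sym2 V × Finset V, ∀ f g : Fin n × V → Bool,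
      (∀ i ∈ suppE G w n j, f i = g i) → (badE G w n j f ↔ badE G w n j g) := by
    intro j f g hfg
    by_cases hj : j ∈ validPairs G w
    · simp only [badE, hj, true_and]
      apply forall_congr'; intro jj
      apply not_congr; apply forall_congr'; intro c
      by_cases hcm : c ∈ ({jj} : Finset (Fin n)) ×ˢ (symVerts j.1 ∪ j.2)
      · have hcS : c ∈ suppE G w n j := by
          simp only [suppE]
          rw [if_pos hj, Finset.mem_product]
          rw [Finset.mem_product] at hcm
          exact ⟨Finset.mem_univ _, hcm.2⟩
        simp only [hcm, forall_true_left, hfg c hcS]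
      · exact iff_of_true (fun h => absurd h hcm) (fun h => absurd h hcm)
    · simp [badE, hj]
  -- dependency degree
  set nb : Sym2 V × Finset V → ℕ := fun j => (Finset.univ.filter
    (fun k => k ≠ j ∧ ¬ Disjoint (suppE G w n k) (suppE G w n j))).card with hnbdef
  set d : ℕ := Finset.univ.sup nb with hd
  have hnble : ∀ j, nb j ≤ d := fun j => Finset.le_sup (Finset.mem_univ j)
  -- per-configuration bound on the dependency degree
  have hnbD : ∀ j, (nb j : ℝ) ≤ D := by
    intro j
    by_cases hj : j ∈ validPairs G w
    · obtain ⟨hje, hjc, hjd⟩ := (mem_validPairs G w j).mp hj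
      set S0 : Finset V := symVerts j.1 ∪ j.2 with hS0
      have hS0card : S0.card = w + 2 := by
        rw [hS0, Finset.card_union_of_disjoint hjd.symm,
          symVerts_card (G.not_isDiag_of_mem_edgeSet (SimpleGraph.mem_edgeFinset.mp hje)), hjc]
        omega
      have hsub : Finset.univ.filter
          (fun k => k ≠ j ∧ ¬ Disjoint (suppE G w n k) (suppE G w n j)) ⊆
          (validPairs G w).filter (fun k => ¬ Disjoint (symVerts k.1 ∪ k.2) S0) := by
        intro k hk
        rw [Finset.mem_filter] at hk ⊢
        obtain ⟨_, hkj, hkd⟩ := hk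
        have hkvp : k ∈ validPairs G w := by
          by_contra hkvp
          apply hkd
          simp only [suppE]
          rw [if_neg hkvp]
          exact Finset.disjoint_empty_left _
        refine ⟨hkvp, ?_⟩
        intro hdisj
        apply hkd
        simp only [suppE]
        rw [if_pos hkvp, if_pos hj]
        rw [Finset.disjoint_left]
        intro c hc hc'
        rw [Finset.mem_product] at hc hc'
        exact (Finset.disjoint_left.mp hdisj) hc.2 hc'.2
      have hTc : (validPairs G w).card = m * Nat.choose (t-2) w := by
        rw [card_validPairs G w t ht, hm]
      have hsplit := Finset.card_filter_add_card_filter_not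
        (s := validPairs G w) (fun k => Disjoint (symVerts k.1 ∪ k.2) S0)
      have h1 : nb j ≤ ((validPairs G w).filter
          (fun k => ¬ Disjoint (symVerts k.1 ∪ k.2) S0)).card :=
        Finset.card_le_card hsub
      have hdc : (G.edgeFinset.filter (fun e => Disjoint (symVerts e) S0)).card *
          Nat.choose (t - w - 4) w ≤
          ((validPairs G w).filter (fun k => Disjoint (symVerts k.1 ∪ k.2) S0)).card := by
        have hcd := card_disjoint_pairs G w t ht S0
        have harg : t - S0.card - 2 = t - w - 4 := by rw [hS0card]; omega
        rw [harg] at hcd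
        exact hcd
      have hbc : (G.edgeFinset.filter (fun e => ¬ Disjoint (symVerts e) S0)).card ≤
          (w+2) * Δ := by
        calc (G.edgeFinset.filter (fun e => ¬ Disjoint (symVerts e) S0)).card
            ≤ ∑ z ∈ S0, G.degree z := card_meeting_edges G S0
          _ ≤ S0.card • Δ := Finset.sum_le_card_nsmul _ _ _
              (fun z _ => hΔ ▸ G.degree_le_maxDegree z)
          _ = (w+2) * Δ := by rw [hS0card, smul_eq_mul]
      have hgb := Finset.card_filter_add_card_filter_not
        (s := G.edgeFinset) (fun e => Disjoint (symVerts e) S0)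
      rw [hm] at hgb
      -- now pass to ℝ
      have hnbR : (nb j : ℝ) + (((validPairs G w).filter
          (fun k => Disjoint (symVerts k.1 ∪ k.2) S0)).card : ℝ) ≤
          (m : ℝ) * (Nat.choose (t-2) w : ℝ) := by
        have : nb j + ((validPairs G w).filter
            (fun k => Disjoint (symVerts k.1 ∪ k.2) S0)).card ≤ m * Nat.choose (t-2) w := by
          omega
        exact_mod_cast this
      have hgcR : ((m:ℝ) - ((w:ℝ)+2) * (Δ:ℝ)) ≤
          ((G.edgeFinset.filter (fun e => Disjoint (symVerts e) S0)).card : ℝ) := by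
        have hbcR : ((G.edgeFinset.filter (fun e => ¬ Disjoint (symVerts e) S0)).card : ℝ) ≤
            ((w:ℝ)+2) * (Δ:ℝ) := by exact_mod_cast hbc
        have hgbR : ((G.edgeFinset.filter (fun e => Disjoint (symVerts e) S0)).card : ℝ) +
            ((G.edgeFinset.filter (fun e => ¬ Disjoint (symVerts e) S0)).card : ℝ) = (m:ℝ) := by
          exact_mod_cast hgb
        linarith
      have hdcR : ((m:ℝ) - ((w:ℝ)+2) * (Δ:ℝ)) * (Nat.choose (t-w-4) w : ℝ) ≤
          (((validPairs G w).filter (fun k => Disjoint (symVerts k.1 ∪ k.2) S0)).card : ℝ) := by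
        calc ((m:ℝ) - ((w:ℝ)+2) * (Δ:ℝ)) * (Nat.choose (t-w-4) w : ℝ)
            ≤ ((G.edgeFinset.filter (fun e => Disjoint (symVerts e) S0)).card : ℝ) *
              (Nat.choose (t-w-4) w : ℝ) := mul_le_mul_of_nonneg_right hgcR hC2nn
          _ ≤ _ := by exact_mod_cast hdc
      rw [hD]
      linarith
    · have : Finset.univ.filter
          (fun k => k ≠ j ∧ ¬ Disjoint (suppE G w n k) (suppE G w n j)) = ∅ := by
        rw [Finset.filter_eq_empty_iff]
        intro k _
        simp only [suppE]
        rw [if_neg hj]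
        simp
      rw [hnbdef]
      simp only [this, Finset.card_empty, Nat.cast_zero]
      exact hD0
  have hdD : (d:ℝ) ≤ D := by
    rcases Finset.eq_empty_or_nonempty (Finset.univ : Finset (Sym2 V × Finset V)) with hemp | hne
    · rw [hd, hemp, Finset.sup_empty]
      simpa using hD0
    · obtain ⟨j, _, hj⟩ := Finset.exists_mem_eq_sup _ hne nb
      rw [hd, hj]
      exact hnbD j
  -- choose x
  set x : ℝ := 1/((d:ℝ)+2) with hx
  have hx0 : 0 < x := by rw [hx]; positivity
  have hx1 : x < 1 := by
    rw [hx, div_lt_one (by positivity)]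
    have : (0:ℝ) ≤ (d:ℝ) := Nat.cast_nonneg d
    linarith
  have hPEbound : ∀ j, Pr pr (badE G w n j) ≤ x * (1-x)^d := by
    intro j
    by_cases hj : j ∈ validPairs G w
    · have hPE : Pr pr (badE G w n j) = q^n := by
        rw [hq, ← Pr_badEvent G n w j hj p]
        apply Pr_congr
        intro f
        simp only [badE, hj, true_and]
      rw [hPE]
      calc q^n ≤ 1/(Real.exp 1 * (D+1)) := hqn
        _ ≤ 1/(Real.exp 1 * ((d:ℝ)+1)) := by
            apply one_div_le_one_div_of_le (by positivity)
            apply mul_le_mul_of_nonneg_left (by linarith) (Real.exp_pos 1).le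
        _ ≤ x * (1-x)^d := by rw [hx]; exact aux_x d
    · have hPE : Pr pr (badE G w n j) = 0 := by
        rw [← Pr_false (pr := pr)]
        apply Pr_congr
        intro f
        simp [badE, hj]
      rw [hPE]
      exact mul_nonneg hx0.le (pow_nonneg (by linarith) d)
  -- apply the local lemma
  obtain ⟨f, hf⟩ := LLL hprh (badE G w n) (suppE G w n) hdep d hnble x hx0 hx1 hPEbound
  refine ⟨fun jj => Finset.univ.filter (fun z => f (jj, z) = true), ?_⟩
  intro u v huv W hWcard hu hv
  have hval : (s(u,v), W) ∈ validPairs G w := by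
    rw [mem_validPairs]
    refine ⟨SimpleGraph.mem_edgeFinset.mpr huv, hWcard, ?_⟩
    rw [symVerts_mk, Finset.disjoint_left]
    intro z hz hz2
    rw [Finset.mem_insert, Finset.mem_singleton] at hz2
    rcases hz2 with rfl | rfl
    exacts [hu hz, hv hz]
  have hne : ¬ badE G w n (s(u,v), W) f := hf (s(u,v), W)
  have hnall : ¬ ∀ jj : Fin n,
      ¬ (∀ c ∈ ({jj} : Finset (Fin n)) ×ˢ (symVerts (s(u,v), W).1 ∪ (s(u,v), W).2),
        f c = decide (c.2 ∈ symVerts (s(u,v), W).1)) :=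
    fun hall => hne ⟨hval, hall⟩
  obtain ⟨jj, hjj⟩ := not_forall.mp hnall
  rw [not_not] at hjj
  rw [Finset.one_le_card]
  refine ⟨jj, ?_⟩
  rw [Finset.mem_filter]
  have hmemU : u ∈ symVerts (s(u,v) : Sym2 V) := by rw [symVerts_mk]; simp
  have hmemV : v ∈ symVerts (s(u,v) : Sym2 V) := by rw [symVerts_mk]; simp
  have hfu : f (jj, u) = true := by
    have hcm : ((jj, u) : Fin n × V) ∈ ({jj} : Finset (Fin n)) ×ˢ
        (symVerts (s(u,v), W).1 ∪ (s(u,v), W).2) := by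
      rw [Finset.mem_product]
      exact ⟨Finset.mem_singleton_self jj, Finset.mem_union_left _ hmemU⟩
    have := hjj (jj, u) hcm
    simpa [hmemU] using this
  have hfv : f (jj, v) = true := by
    have hcm : ((jj, v) : Fin n × V) ∈ ({jj} : Finset (Fin n)) ×ˢ
        (symVerts (s(u,v), W).1 ∪ (s(u,v), W).2) := by
      rw [Finset.mem_product]
      exact ⟨Finset.mem_singleton_self jj, Finset.mem_union_left _ hmemV⟩
    have := hjj (jj, v) hcm
    simpa [hmemV] using this
  refine ⟨Finset.mem_univ jj, ?_, ?_, ?_⟩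
  · rw [Finset.mem_filter]; exact ⟨Finset.mem_univ u, hfu⟩
  · rw [Finset.mem_filter]; exact ⟨Finset.mem_univ v, hfv⟩
  · rw [Finset.disjoint_left]
    intro z hz hz'
    rw [Finset.mem_filter] at hz'
    have hznot : z ∉ symVerts (s(u,v) : Sym2 V) := by
      obtain ⟨-, -, hdis⟩ := (mem_validPairs G w _).mp hval
      exact Finset.disjoint_left.mp hdis hz
    have hcm : ((jj, z) : Fin n × V) ∈ ({jj} : Finset (Fin n)) ×ˢ
        (symVerts (s(u,v), W).1 ∪ (s(u,v), W).2) := by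
      rw [Finset.mem_product]
      exact ⟨Finset.mem_singleton_self jj, Finset.mem_union_right _ hz⟩
    have := hjj (jj, z) hcm
    rw [hz'.2] at this
    simp [hznot] at this

end Main


/-!
STATEMENT 19: Let G be a finite graph with t vertices, m edges, and maximum
degree Δ, and let w be a positive integer.  For any real number p with
0 < p < 1, set q = 1 − p²(1−p)^w and
D = m·C(t−2,w) − (m − (w+2)Δ)·C(t−w−4,w).  Then
N(G,w;1) ≤ ⌈log₂(e(D+1)) / (−log₂ q)⌉.
-/

theorem stmt_19 {V : Type*} [Fintype V] [DecidableEq V] (G : SimpleGraph V)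
    [DecidableRel G.Adj] (t m Δ w : ℕ) (hw : 0 < w)
    (ht : Fintype.card V = t) (hm : G.edgeFinset.card = m)
    (hΔ : G.maxDegree = Δ)
    (p : ℝ) (hp0 : 0 < p) (hp1 : p < 1)
    (q : ℝ) (hq : q = 1 - p ^ 2 * (1 - p) ^ w)
    (D : ℝ) (hD : D = (m : ℝ) * (Nat.choose (t - 2) w : ℝ) -
      ((m : ℝ) - ((w : ℝ) + 2) * (Δ : ℝ)) * (Nat.choose (t - w - 4) w : ℝ)) :
    NGraphCov G w 1 ≤
      ⌈Real.logb 2 (Real.exp 1 * (D + 1)) / (-Real.logb 2 q)⌉₊ := by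
  obtain ⟨A, hA⟩ := main_thm G t m Δ w hw ht hm hΔ p hp0 hp1 q hq D hD
  exact Nat.sInf_le ⟨A, hA⟩
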